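/- Let p be a prime, n a positive integer, d a positive integer, and e = gcd(d, p^n - 1). Then the power function x ↦ x^d on F_{p^n} is zero-difference (e-1)-balanced; that is, for every nonzero a ∈ F_{p^n}, the equation (x+a)^d = x^d has exactly e-1 solutions x ∈ F_{p^n}. -/

import Mathlib

open Finset

theorem stmt0 (p n d : ℕ) (hp : p.Prime) (hn : 0 < n) (hd : 0 < d)
    (K : Type) [Field K] [Fintype K] [DecidableEq K]
    (hcard : Fintype.card K = p ^ n)
    (e : ℕ) (he : e = Nat.gcd d (p ^ n - 1)) :
    ∀ a : K, a ≠ 0 →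
      (Finset.univ.filter (fun x : K => (x + a) ^ d = x ^ d)).card = e - 1 := by
  intro a ha
  have hq1 : 0 < p ^ n - 1 := by
    have : 2 ≤ p ^ n := le_trans hp.two_le (Nat.le_self_pow hn.ne' p)
    omega
  have hcardu : Fintype.card Kˣ = p ^ n - 1 := by
    rw [Fintype.card_units, hcard]
  have he0 : 0 < e := by
    rw [he]; exact Nat.gcd_pos_of_pos_left _ hd
  have hed : e ∣ d := he ▸ Nat.gcd_dvd_left _ _
  have heq1 : e ∣ p ^ n - 1 := he ▸ Nat.gcd_dvd_right _ _
  -- u^e = 1 → u^d = 1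
  have hed1 : ∀ u : K, u ^ e = 1 → u ^ d = 1 := by
    intro u h
    obtain ⟨c, rfl⟩ := hed
    rw [pow_mul, h, one_pow]
  -- u ≠ 0 and u^d = 1 → u^e = 1
  have hde1 : ∀ u : K, u ≠ 0 → u ^ d = 1 → u ^ e = 1 := by
    intro u hu h
    have hv : (Units.mk0 u hu) ^ d = 1 := by ext; simpa using h
    have := (pow_gcd_eq_one (a := Units.mk0 u hu) (m := d) (n := Fintype.card Kˣ)).mpr ⟨hv, pow_card_eq_one⟩
    rw [hcardu, ← he] at this
    simpa using congrArg Units.val this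
  -- count of e-th roots of unity
  obtain ⟨g, hg⟩ := IsCyclic.exists_generator (α := Kˣ)
  have hog : orderOf g = p ^ n - 1 := by
    rw [orderOf_eq_card_of_forall_mem_zpowers hg, Nat.card_eq_fintype_card, hcardu]
  set m := (p ^ n - 1) / e with hm
  have hme : m * e = p ^ n - 1 := Nat.div_mul_cancel heq1
  have hm0 : 0 < m := by
    rcases Nat.eq_zero_or_pos m with h | h
    · rw [h, zero_mul] at hme; omega
    · exact h
  have hprim : IsPrimitiveRoot ((g ^ m : Kˣ) : K) e := by
    rw [IsPrimitiveRoot.coe_units_iff]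
    have hoe : orderOf (g ^ m) = e := by
      rw [orderOf_pow, hog, Nat.gcd_eq_right ⟨e, hme.symm⟩, ← hme,
        Nat.mul_div_cancel_left _ hm0]
    exact hoe ▸ IsPrimitiveRoot.orderOf _
  have hcount : (Polynomial.nthRootsFinset e (1 : K)).card = e :=
    hprim.card_nthRootsFinset
  have h1mem : (1 : K) ∈ Polynomial.nthRootsFinset e (1 : K) :=
    (Polynomial.mem_nthRootsFinset he0 (1 : K)).mpr (one_pow e)
  have hbij : (Finset.univ.filter (fun x : K => (x + a) ^ d = x ^ d)).card
      = ((Polynomial.nthRootsFinset e (1 : K)).erase 1).card := by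
    apply Finset.card_bij' (fun x _ => (x + a) * x⁻¹) (fun u _ => a * (u - 1)⁻¹)
    · -- maps into target
      intro x hx
      rw [mem_filter] at hx
      have hx0 : x ≠ 0 := by
        rintro rfl
        rw [zero_add, zero_pow hd.ne'] at hx
        exact pow_ne_zero d ha hx.2
      rw [Finset.mem_erase, Polynomial.mem_nthRootsFinset he0]
      refine ⟨?_, ?_⟩
      · intro h1
        field_simp at h1
        exact ha (by simpa using h1)
      · apply hde1
        · intro h
          rcases mul_eq_zero.mp h with h' | h'
          · rw [h', zero_pow hd.ne'] at hx
            exact hx0 (pow_eq_zero_iff hd.ne' |>.mp hx.2.symm)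
          · exact hx0 (inv_eq_zero.mp h')
        · rw [mul_pow, inv_pow, hx.2, mul_inv_cancel₀ (pow_ne_zero d hx0)]
    · -- inverse maps into source
      intro u hu
      rw [Finset.mem_erase, Polynomial.mem_nthRootsFinset he0] at hu
      obtain ⟨hu1, hue⟩ := hu
      have hu0 : u - 1 ≠ 0 := sub_ne_zero.mpr hu1
      rw [mem_filter]
      refine ⟨mem_univ _, ?_⟩
      have hx : a * (u - 1)⁻¹ + a = (a * (u - 1)⁻¹) * u := by
        field_simp
        ring
      rw [hx, mul_pow, hed1 u hue, mul_one]
    · -- left inverse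
      intro x hx
      rw [mem_filter] at hx
      have hx0 : x ≠ 0 := by
        rintro rfl
        rw [zero_add, zero_pow hd.ne'] at hx
        exact pow_ne_zero d ha hx.2
      have h : (x + a) * x⁻¹ - 1 = a * x⁻¹ := by
        field_simp
        ring
      rw [h]
      field_simp
    · -- right inverse
      intro u hu
      rw [Finset.mem_erase, Polynomial.mem_nthRootsFinset he0] at hu
      have hu0 : u - 1 ≠ 0 := sub_ne_zero.mpr hu.1
      have hx0 : a * (u - 1)⁻¹ ≠ 0 := mul_ne_zero ha (inv_ne_zero hu0)
      have hx : a * (u - 1)⁻¹ + a = (a * (u - 1)⁻¹) * u := by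
        field_simp
        ring
      rw [hx, mul_comm (a * (u - 1)⁻¹) u, mul_assoc, mul_inv_cancel₀ hx0, mul_one]
  rw [hbij, Finset.card_erase_of_mem h1mem, hcount]
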